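/- (§5.1 together with 5.3(a).) Let 𝕜 be an algebraically closed field, σ ≥ 1, and p_1 ≥ ⋯ ≥ p_σ ≥ 1 integers; set n = (2p_1−1)+⋯+(2p_σ−1) and let V be an n-dimensional 𝕜-vector space. Then there exist a nondegenerate bilinear form B on V — with T the linear automorphism determined by B(Tx,y) = B(y,x) — and vectors v_1,…,v_σ ∈ V such that: T is unipotent with dim ker((T−1)^k) = Σ_r min(k, 2p_r−1) for all k ≥ 0; the v_r satisfy the normalized 𝒮-conditions; and in addition, for every t ∈ {1,…,σ} there exists x ∈ V with (T−1)^{2p_t−1} x = 0 and B((T−1)^{p_t−1} x, (T−1)^{p_t−1} x) ≠ 0. -/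

import Mathlib

open Module Finset

namespace SLem

/-- Integer Gram matrix entries for a block of size `2*p-1`. -/
def G (p i j : ℕ) : ℤ :=
  if i + j ≤ 2 * p - 2 then
    if p - 1 ≤ j then (-1) ^ i * ((p - 1 - i).choose (2 * p - 2 - i - j) : ℤ)
    else (-1) ^ j * ((p - 2 - j).choose (2 * p - 2 - i - j) : ℤ)
  else 0

lemma G_eq_zero {p i j : ℕ} (h : 2 * p - 2 < i + j) : G p i j = 0 := by
  rw [G, if_neg (by omega)]

lemma G_eq_hi {p i j : ℕ} (hg : i + j ≤ 2 * p - 2) (hj : p - 1 ≤ j) :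
    G p i j = (-1) ^ i * ((p - 1 - i).choose (2 * p - 2 - i - j) : ℤ) := by
  rw [G, if_pos hg, if_pos hj]

lemma G_eq_lo {p i j : ℕ} (hg : i + j ≤ 2 * p - 2) (hj : j < p - 1) :
    G p i j = (-1) ^ j * ((p - 2 - j).choose (2 * p - 2 - i - j) : ℤ) := by
  rw [G, if_pos hg, if_neg (by omega)]

lemma neg_one_pow_congr {i j : ℕ} (h : i % 2 = j % 2) : ((-1 : ℤ)) ^ i = (-1) ^ j := by
  rcases Nat.even_or_odd i with hi | hi
  · have hi' := Nat.even_iff.mp hi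
    rw [hi.neg_one_pow, (Nat.even_iff.mpr (by omega : j % 2 = 0)).neg_one_pow]
  · have hi' := Nat.odd_iff.mp hi
    rw [hi.neg_one_pow, (Nat.odd_iff.mpr (by omega : j % 2 = 1)).neg_one_pow]

lemma G_antidiag {p i j : ℕ} (h : i + j = 2 * p - 2) : G p i j = (-1) ^ i := by
  by_cases hj : p - 1 ≤ j
  · rw [G_eq_hi (by omega) hj, show 2 * p - 2 - i - j = 0 by omega, Nat.choose_zero_right]
    simp
  · rw [G_eq_lo (by omega) (by omega), show 2 * p - 2 - i - j = 0 by omega,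
      Nat.choose_zero_right]
    have : ((-1 : ℤ)) ^ j = (-1) ^ i := neg_one_pow_congr (by omega)
    simp [this]

lemma G_row0_zero {p j : ℕ} (hj : j < p - 1) : G p 0 j = 0 := by
  rw [G_eq_lo (by omega) hj, Nat.choose_eq_zero_of_lt (by omega)]
  simp

lemma G_row0_diag {p : ℕ} (hp : 1 ≤ p) : G p 0 (p - 1) = 1 := by
  rw [G_eq_hi (by omega) le_rfl, show 2 * p - 2 - 0 - (p - 1) = p - 1 - 0 by omega,
    Nat.choose_self]
  simp

lemma G_pascal (p : ℕ) (hp : 1 ≤ p) (i j : ℕ) : G p i j + G p (i + 1) j = G p j i := by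
  by_cases hA : 2 * p - 2 < i + j
  · rw [G_eq_zero hA, G_eq_zero (by omega), G_eq_zero (by omega)]; ring
  · push_neg at hA
    by_cases hB : p - 1 ≤ j
    · have hi : i ≤ p - 1 := by omega
      by_cases hK : i + j = 2 * p - 2
      · rw [G_eq_zero (show 2 * p - 2 < (i + 1) + j by omega), add_zero]
        by_cases hij : p - 1 ≤ i
        · have h1 : i = p - 1 := by omega
          have h2 : j = p - 1 := by omega
          rw [h1, h2]
        · rw [G_eq_hi hA hB, G_eq_lo (by omega) (by omega),
            show 2 * p - 2 - i - j = 0 by omega, show 2 * p - 2 - j - i = 0 by omega,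
            Nat.choose_zero_right, Nat.choose_zero_right]
      · have hi' : i < p - 1 := by omega
        rw [G_eq_hi hA hB, G_eq_hi (by omega) hB, G_eq_lo (by omega) hi']
        obtain ⟨K, hKe⟩ : ∃ K, 2 * p - 2 - i - j = K + 1 := ⟨2 * p - 2 - i - j - 1, by omega⟩
        rw [hKe, show p - 1 - i = (p - 2 - i) + 1 by omega,
          show 2 * p - 2 - (i + 1) - j = K by omega,
          show 2 * p - 2 - j - i = K + 1 by omega,
          show p - 1 - (i + 1) = p - 2 - i by omega,
          Nat.choose_succ_succ (p - 2 - i) K]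
        push_cast
        ring
    · push_neg at hB
      by_cases hK : i + j = 2 * p - 2
      · have hpi : p - 1 ≤ i := by omega
        rw [G_eq_zero (show 2 * p - 2 < (i + 1) + j by omega), add_zero, G_eq_lo hA hB,
          G_eq_hi (by omega) hpi,
          show 2 * p - 2 - i - j = 0 by omega, show 2 * p - 2 - j - i = 0 by omega,
          Nat.choose_zero_right, Nat.choose_zero_right]
      · rw [G_eq_lo hA hB, G_eq_lo (by omega) hB]
        by_cases hij : p - 1 ≤ i
        · rw [G_eq_hi (by omega) hij]
          obtain ⟨K, hKe⟩ : ∃ K, 2 * p - 2 - (i + 1) - j = K := ⟨_, rfl⟩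
          rw [hKe, show 2 * p - 2 - i - j = K + 1 by omega,
            show 2 * p - 2 - j - i = K + 1 by omega,
            show p - 1 - j = (p - 2 - j) + 1 by omega,
            Nat.choose_succ_succ (p - 2 - j) K]
          push_cast
          ring
        · rw [G_eq_lo (by omega) (by omega),
            Nat.choose_eq_zero_of_lt (by omega : p - 2 - j < 2 * p - 2 - i - j),
            Nat.choose_eq_zero_of_lt (by omega : p - 2 - j < 2 * p - 2 - (i + 1) - j),
            Nat.choose_eq_zero_of_lt (by omega : p - 2 - i < 2 * p - 2 - j - i)]
          ring

section Model

variable {𝕜 : Type*} [Field 𝕜] {σ : ℕ} {q : Fin σ → ℕ}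

/-- Index type: disjoint union of blocks of sizes `2*q r - 1`. -/
abbrev Idx (σ : ℕ) (q : Fin σ → ℕ) : Type := (r : Fin σ) × Fin (2 * q r - 1)

/-- Out-of-range-safe coordinates. -/
def xc (x : Idx σ q → 𝕜) (r : Fin σ) (i : ℕ) : 𝕜 :=
  if h : i < 2 * q r - 1 then x ⟨r, ⟨i, h⟩⟩ else 0

/-- Delta vector at block `r`, position `i` (zero if `i` out of range). -/
def dl (r : Fin σ) (i : ℕ) : Idx σ q → 𝕜 := fun b => if b.1 = r ∧ (b.2 : ℕ) = i then 1 else 0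

lemma x_congr (x : Idx σ q → 𝕜) (r : Fin σ) {i i' : ℕ} (h : i < 2 * q r - 1)
    (h' : i' < 2 * q r - 1) (hii : i = i') : x ⟨r, ⟨i, h⟩⟩ = x ⟨r, ⟨i', h'⟩⟩ := by
  subst hii; rfl

@[simp] lemma xc_add (x y : Idx σ q → 𝕜) (r : Fin σ) (i : ℕ) :
    xc (x + y) r i = xc x r i + xc y r i := by
  unfold xc; split <;> simp

@[simp] lemma xc_smul (c : 𝕜) (x : Idx σ q → 𝕜) (r : Fin σ) (i : ℕ) :
    xc (c • x) r i = c * xc x r i := by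
  unfold xc; split <;> simp

@[simp] lemma xc_zero (r : Fin σ) (i : ℕ) : xc (0 : Idx σ q → 𝕜) r i = 0 := by
  unfold xc; split <;> simp

lemma xc_dl (r r' : Fin σ) (i i' : ℕ) :
    xc (dl r i : Idx σ q → 𝕜) r' i' = if i' < 2 * q r' - 1 ∧ r' = r ∧ i' = i then 1 else 0 := by
  unfold xc dl
  by_cases h : i' < 2 * q r' - 1
  · rw [dif_pos h]
    by_cases h2 : r' = r ∧ i' = i
    · rw [if_pos (show _ ∧ _ from ⟨h2.1, h2.2⟩), if_pos ⟨h, h2.1, h2.2⟩]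
    · rw [if_neg (by rintro ⟨h3, h4⟩; exact h2 ⟨h3, h4⟩),
        if_neg (by rintro ⟨_, h3, h4⟩; exact h2 ⟨h3, h4⟩)]
  · rw [dif_neg h, if_neg (by rintro ⟨h1, _⟩; exact h h1)]

/-- The shift (lowering) operator, acting blockwise. -/
def Sl : (Idx σ q → 𝕜) →ₗ[𝕜] (Idx σ q → 𝕜) where
  toFun x a := if 0 < (a.2 : ℕ) then
      x ⟨a.1, ⟨(a.2 : ℕ) - 1, lt_of_le_of_lt (Nat.sub_le _ _) a.2.isLt⟩⟩ else 0
  map_add' x y := by funext a; by_cases h : 0 < (a.2 : ℕ) <;> simp [h]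
  map_smul' c x := by funext a; by_cases h : 0 < (a.2 : ℕ) <;> simp [h]

lemma Sl_apply (x : Idx σ q → 𝕜) (a : Idx σ q) :
    Sl x a = if h : 0 < (a.2 : ℕ) then
      x ⟨a.1, ⟨(a.2 : ℕ) - 1, lt_of_le_of_lt (Nat.sub_le _ _) a.2.isLt⟩⟩ else 0 := by
  rw [Sl]
  simp only [LinearMap.coe_mk, AddHom.coe_mk]
  split <;> simp_all

lemma Sl_pow_apply (k : ℕ) (x : Idx σ q → 𝕜) (a : Idx σ q) :
    (Sl ^ k) x a = if h : k ≤ (a.2 : ℕ) then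
      x ⟨a.1, ⟨(a.2 : ℕ) - k, lt_of_le_of_lt (Nat.sub_le _ _) a.2.isLt⟩⟩ else 0 := by
  induction k generalizing x with
  | zero =>
    rw [pow_zero, Module.End.one_apply, dif_pos (Nat.zero_le _)]
    rfl
  | succ k ih =>
    rw [pow_succ, Module.End.mul_apply, ih (Sl x)]
    by_cases h1 : k + 1 ≤ (a.2 : ℕ)
    · rw [dif_pos (show k ≤ (a.2 : ℕ) by omega), Sl_apply,
        dif_pos (show 0 < (a.2 : ℕ) - k by omega), dif_pos h1]
      exact x_congr x a.1 _ _ (Nat.sub_sub _ _ _)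
    · by_cases h2 : k ≤ (a.2 : ℕ)
      · rw [dif_pos h2, dif_neg h1, Sl_apply, dif_neg (show ¬ 0 < (a.2 : ℕ) - k by omega)]
      · rw [dif_neg h2, dif_neg h1]

lemma Sl_pow_dl (k : ℕ) (r : Fin σ) :
    (Sl ^ k) (dl r 0 : Idx σ q → 𝕜) = dl r k := by
  funext a
  rw [Sl_pow_apply]
  unfold dl
  by_cases h : k ≤ (a.2 : ℕ)
  · rw [dif_pos h]
    by_cases h1 : a.1 = r ∧ ((a.2 : ℕ) - k) = 0
    · rw [if_pos ⟨h1.1, h1.2⟩, if_pos ⟨h1.1, by omega⟩]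
    · rw [if_neg h1, if_neg (by
        rintro ⟨hh1, hh2⟩; exact h1 ⟨hh1, by omega⟩)]
  · rw [dif_neg h, if_neg (by rintro ⟨hh1, hh2⟩; omega)]

end Model
section Model2

variable {𝕜 : Type*} [Field 𝕜] {σ : ℕ} {q : Fin σ → ℕ}

/-- The model bilinear form, given by the Gram entries `G` blockwise. -/
def Bl (n : ℕ) : (Idx σ q → 𝕜) →ₗ[𝕜] (Idx σ q → 𝕜) →ₗ[𝕜] 𝕜 :=
  LinearMap.mk₂ 𝕜
    (fun x y => ∑ r : Fin σ, ∑ i ∈ Finset.range n, ∑ j ∈ Finset.range n,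
      (G (q r) i j : 𝕜) * (xc x r i * xc y r j))
    (by
      intro x x' y
      rw [← Finset.sum_add_distrib]
      refine Finset.sum_congr rfl fun r _ => ?_
      rw [← Finset.sum_add_distrib]
      refine Finset.sum_congr rfl fun i _ => ?_
      rw [← Finset.sum_add_distrib]
      refine Finset.sum_congr rfl fun j _ => ?_
      rw [xc_add]; ring)
    (by
      intro c x y
      rw [smul_eq_mul, Finset.mul_sum]
      refine Finset.sum_congr rfl fun r _ => ?_
      rw [Finset.mul_sum]
      refine Finset.sum_congr rfl fun i _ => ?_
      rw [Finset.mul_sum]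
      refine Finset.sum_congr rfl fun j _ => ?_
      rw [xc_smul]; ring)
    (by
      intro x y y'
      rw [← Finset.sum_add_distrib]
      refine Finset.sum_congr rfl fun r _ => ?_
      rw [← Finset.sum_add_distrib]
      refine Finset.sum_congr rfl fun i _ => ?_
      rw [← Finset.sum_add_distrib]
      refine Finset.sum_congr rfl fun j _ => ?_
      rw [xc_add]; ring)
    (by
      intro c x y
      rw [smul_eq_mul, Finset.mul_sum]
      refine Finset.sum_congr rfl fun r _ => ?_
      rw [Finset.mul_sum]
      refine Finset.sum_congr rfl fun i _ => ?_
      rw [Finset.mul_sum]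
      refine Finset.sum_congr rfl fun j _ => ?_
      rw [xc_smul]; ring)

lemma Bl_apply (n : ℕ) (x y : Idx σ q → 𝕜) :
    Bl n x y = ∑ r : Fin σ, ∑ i ∈ Finset.range n, ∑ j ∈ Finset.range n,
      (G (q r) i j : 𝕜) * (xc x r i * xc y r j) :=
  rfl

/-- Row functional. -/
def Row (n : ℕ) (r : Fin σ) (y : Idx σ q → 𝕜) (i : ℕ) : 𝕜 :=
  ∑ j ∈ Finset.range n, (G (q r) i j : 𝕜) * xc y r j

lemma Row_zero (n : ℕ) (r : Fin σ) (hq1 : 1 ≤ q r) (y : Idx σ q → 𝕜) {i : ℕ}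
    (hi : 2 * q r - 1 ≤ i) : Row n r y i = 0 := by
  refine Finset.sum_eq_zero fun j _ => ?_
  rw [G_eq_zero (by omega)]
  simp

lemma Bl_eq_rows (n : ℕ) (x y : Idx σ q → 𝕜) :
    Bl n x y = ∑ r : Fin σ, ∑ i ∈ Finset.range n, xc x r i * Row n r y i := by
  rw [Bl_apply]
  refine Finset.sum_congr rfl fun r _ => Finset.sum_congr rfl fun i _ => ?_
  rw [Row, Finset.mul_sum]
  refine Finset.sum_congr rfl fun j _ => by ring

lemma xc_Sl (x : Idx σ q → 𝕜) (r : Fin σ) (i : ℕ) :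
    xc (Sl x) r i = if 0 < i ∧ i < 2 * q r - 1 then xc x r (i - 1) else 0 := by
  unfold xc
  by_cases h : i < 2 * q r - 1
  · rw [dif_pos h, Sl_apply]
    by_cases h0 : 0 < i
    · rw [dif_pos h0, if_pos ⟨h0, h⟩, dif_pos (by omega)]
    · rw [dif_neg h0, if_neg (by rintro ⟨h1, _⟩; omega)]
  · rw [dif_neg h, if_neg (by rintro ⟨_, h1⟩; omega)]

lemma key_shift {n : ℕ} (hq : ∀ r : Fin σ, 1 ≤ q r) (hm : ∀ r : Fin σ, 2 * q r - 1 ≤ n)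
    (hn : 0 < n)
    (x y : Idx σ q → 𝕜) (r : Fin σ) :
    ∑ i ∈ Finset.range n, xc (Sl x) r i * Row n r y i
      = ∑ i ∈ Finset.range n, xc x r i * Row n r y (i + 1) := by
  obtain ⟨n', rfl⟩ : ∃ n', n = n' + 1 := ⟨n - 1, by omega⟩
  rw [Finset.sum_range_succ' (fun i => xc (Sl x) r i * Row (n' + 1) r y i) n']
  rw [Finset.sum_range_succ (fun i => xc x r i * Row (n' + 1) r y (i + 1)) n']
  have h0 : xc (Sl x) r 0 * Row (n' + 1) r y 0 = 0 := by
    rw [xc_Sl, if_neg (by rintro ⟨h1, _⟩; omega), zero_mul]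
  have hlast : xc x r n' * Row (n' + 1) r y (n' + 1) = 0 := by
    rw [Row_zero _ _ (hq r) _ (by have := hm r; omega), mul_zero]
  rw [h0, hlast, add_zero, add_zero]
  refine Finset.sum_congr rfl fun i _ => ?_
  rw [xc_Sl]
  by_cases h : i + 1 < 2 * q r - 1
  · rw [if_pos ⟨by omega, h⟩, Nat.add_sub_cancel]
  · rw [if_neg (by rintro ⟨_, h1⟩; exact h h1), zero_mul]
    by_cases h2 : i < 2 * q r - 1
    · rw [Row_zero _ _ (hq r) _ (by omega), mul_zero]
    · rw [xc, dif_neg h2, zero_mul]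

lemma Bl_shift_eq {n : ℕ} (hq : ∀ r : Fin σ, 1 ≤ q r) (hm : ∀ r : Fin σ, 2 * q r - 1 ≤ n)
    (hn : 0 < n) (x y : Idx σ q → 𝕜) :
    Bl n (x + Sl x) y = Bl n y x := by
  rw [map_add, LinearMap.add_apply, Bl_eq_rows, Bl_eq_rows]
  have : ∀ r : Fin σ, r ∈ Finset.univ →
      (∑ i ∈ Finset.range n, xc x r i * Row n r y i)
        + ∑ i ∈ Finset.range n, xc (Sl x) r i * Row n r y i
      = ∑ i ∈ Finset.range n, ∑ j ∈ Finset.range n, (G (q r) j i : 𝕜) * (xc y r j * xc x r i) := by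
    intro r _
    rw [key_shift hq hm hn x y r, ← Finset.sum_add_distrib]
    refine Finset.sum_congr rfl fun i _ => ?_
    rw [← mul_add]
    have hrow : Row n r y i + Row n r y (i + 1)
        = ∑ j ∈ Finset.range n, (G (q r) j i : 𝕜) * xc y r j := by
      rw [Row, Row, ← Finset.sum_add_distrib]
      refine Finset.sum_congr rfl fun j _ => ?_
      rw [← add_mul]
      congr 1
      rw [← Int.cast_add, G_pascal (q r) (hq r) i j]
    rw [hrow, Finset.mul_sum]
    refine Finset.sum_congr rfl fun j _ => by ring
  rw [← Finset.sum_add_distrib, Finset.sum_congr rfl this, Bl_apply]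
  exact Finset.sum_congr rfl fun r _ => Finset.sum_comm

lemma Sl_pow_n_eq_zero {n : ℕ} (hm : ∀ r : Fin σ, 2 * q r - 1 ≤ n) :
    (Sl : (Idx σ q → 𝕜) →ₗ[𝕜] (Idx σ q → 𝕜)) ^ n = 0 := by
  apply LinearMap.ext
  intro x
  funext a
  rw [Sl_pow_apply, dif_neg (by have := hm a.1; have := a.2.isLt; omega)]
  rfl

/-- The model automorphism `T = 1 + S`. -/
noncomputable def Tl (n : ℕ) (hm : ∀ r : Fin σ, 2 * q r - 1 ≤ n) :
    (Idx σ q → 𝕜) ≃ₗ[𝕜] (Idx σ q → 𝕜) :=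
  LinearEquiv.ofBijective (1 + Sl)
    (Module.End.isUnit_iff (1 + Sl) |>.mp
      (IsNilpotent.isUnit_one_add ⟨n, Sl_pow_n_eq_zero hm⟩))

lemma Tl_apply (n : ℕ) (hm : ∀ r : Fin σ, 2 * q r - 1 ≤ n) (x : Idx σ q → 𝕜) :
    Tl n hm x = x + Sl x := by
  rw [Tl, LinearEquiv.ofBijective_apply, LinearMap.add_apply, Module.End.one_apply]

lemma Tl_pow_apply (n : ℕ) (hm : ∀ r : Fin σ, 2 * q r - 1 ≤ n) (k : ℕ) (x : Idx σ q → 𝕜) :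
    (Tl n hm ^ k) x = (((1 + Sl : (Idx σ q → 𝕜) →ₗ[𝕜] (Idx σ q → 𝕜))) ^ k) x := by
  induction k generalizing x with
  | zero => rw [pow_zero, pow_zero]; rfl
  | succ k ih =>
    have h1 : (Tl n hm ^ (k + 1)) x = (Tl n hm ^ k) (Tl n hm x) := by rw [pow_succ]; rfl
    rw [h1, ih (Tl n hm x), Tl_apply, pow_succ, Module.End.mul_apply]
    congr 1

end Model2
section Model3

variable {𝕜 : Type*} [Field 𝕜] {σ : ℕ} {q : Fin σ → ℕ}

lemma Bl_x_dl {n : ℕ} (hm : ∀ r : Fin σ, 2 * q r - 1 ≤ n) (x : Idx σ q → 𝕜) (r : Fin σ)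
    (j : ℕ) (hj : j < 2 * q r - 1) :
    Bl n x (dl r j) = ∑ i ∈ Finset.range n, (G (q r) i j : 𝕜) * xc x r i := by
  rw [Bl_apply]
  have hjn : j ∈ Finset.range n := Finset.mem_range.mpr (lt_of_lt_of_le hj (hm r))
  have hinner : ∀ r' : Fin σ, ∀ i : ℕ,
      ∑ j' ∈ Finset.range n, (G (q r') i j' : 𝕜) * (xc x r' i * xc (dl r j : Idx σ q → 𝕜) r' j')
        = if r' = r then (G (q r) i j : 𝕜) * xc x r' i else 0 := by
    intro r' i
    have hzero : ∀ j' ∈ Finset.range n, j' ≠ j →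
        (G (q r') i j' : 𝕜) * (xc x r' i * xc (dl r j : Idx σ q → 𝕜) r' j') = 0 := by
      intro j' _ hne
      rw [xc_dl, if_neg (by rintro ⟨_, _, h2⟩; exact hne h2), mul_zero, mul_zero]
    rw [Finset.sum_eq_single_of_mem j hjn hzero]
    rw [xc_dl]
    by_cases hr : r' = r
    · subst hr
      rw [if_pos ⟨hj, rfl, rfl⟩, if_pos rfl, mul_one]
    · rw [if_neg (by rintro ⟨_, h1, _⟩; exact hr h1), if_neg hr, mul_zero, mul_zero]
  calc ∑ r' : Fin σ, ∑ i ∈ Finset.range n, ∑ j' ∈ Finset.range n,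
        (G (q r') i j' : 𝕜) * (xc x r' i * xc (dl r j : Idx σ q → 𝕜) r' j')
      = ∑ r' : Fin σ, ∑ i ∈ Finset.range n,
          (if r' = r then (G (q r) i j : 𝕜) * xc x r' i else 0) :=
        Finset.sum_congr rfl fun r' _ => Finset.sum_congr rfl fun i _ => hinner r' i
    _ = ∑ i ∈ Finset.range n, (G (q r) i j : 𝕜) * xc x r i := by
        rw [Finset.sum_eq_single_of_mem r (Finset.mem_univ r)
          (fun r' _ hne => Finset.sum_eq_zero fun i _ => if_neg hne)]
        exact Finset.sum_congr rfl fun i _ => if_pos rfl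

lemma Bl_dl_x {n : ℕ} (hm : ∀ r : Fin σ, 2 * q r - 1 ≤ n) (y : Idx σ q → 𝕜) (r : Fin σ)
    (i : ℕ) (hi : i < 2 * q r - 1) :
    Bl n (dl r i) y = ∑ j ∈ Finset.range n, (G (q r) i j : 𝕜) * xc y r j := by
  rw [Bl_apply]
  have hin : i ∈ Finset.range n := Finset.mem_range.mpr (lt_of_lt_of_le hi (hm r))
  have hinner : ∀ r' : Fin σ,
      ∑ i' ∈ Finset.range n, ∑ j' ∈ Finset.range n,
        (G (q r') i' j' : 𝕜) * (xc (dl r i : Idx σ q → 𝕜) r' i' * xc y r' j')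
      = if r' = r then ∑ j' ∈ Finset.range n, (G (q r) i j' : 𝕜) * xc y r' j' else 0 := by
    intro r'
    have hzero : ∀ i' ∈ Finset.range n, i' ≠ i →
        ∑ j' ∈ Finset.range n, (G (q r') i' j' : 𝕜) * (xc (dl r i : Idx σ q → 𝕜) r' i' * xc y r' j') = 0 := by
      intro i' _ hne
      refine Finset.sum_eq_zero fun j' _ => ?_
      rw [xc_dl, if_neg (by rintro ⟨_, _, h2⟩; exact hne h2), zero_mul, mul_zero]
    rw [Finset.sum_eq_single_of_mem i hin hzero]
    by_cases hr : r' = r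
    · subst hr
      rw [if_pos rfl]
      refine Finset.sum_congr rfl fun j' _ => ?_
      rw [xc_dl, if_pos ⟨hi, rfl, rfl⟩, one_mul]
    · rw [if_neg hr]
      refine Finset.sum_eq_zero fun j' _ => ?_
      rw [xc_dl, if_neg (by rintro ⟨_, h1, _⟩; exact hr h1), zero_mul, mul_zero]
  rw [Finset.sum_congr rfl fun r' _ => hinner r',
    Finset.sum_eq_single_of_mem r (Finset.mem_univ r) (fun r' _ hne => if_neg hne), if_pos rfl]

lemma Bl_dl_dl {n : ℕ} (hm : ∀ r : Fin σ, 2 * q r - 1 ≤ n) (r : Fin σ) (i j : ℕ)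
    (hi : i < 2 * q r - 1) (hj : j < 2 * q r - 1) :
    Bl n (dl r i) (dl r j : Idx σ q → 𝕜) = (G (q r) i j : 𝕜) := by
  rw [Bl_x_dl hm _ r j hj]
  have hzero : ∀ i' ∈ Finset.range n, i' ≠ i →
      (G (q r) i' j : 𝕜) * xc (dl r i : Idx σ q → 𝕜) r i' = 0 := by
    intro i' _ hne
    rw [xc_dl, if_neg (by rintro ⟨_, _, h2⟩; exact hne h2), mul_zero]
  rw [Finset.sum_eq_single_of_mem i (Finset.mem_range.mpr (lt_of_lt_of_le hi (hm r))) hzero,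
    xc_dl, if_pos ⟨hi, rfl, rfl⟩, mul_one]

/-- Support in block `r0`. -/
def Supp (r0 : Fin σ) (x : Idx σ q → 𝕜) : Prop := ∀ a : Idx σ q, a.1 ≠ r0 → x a = 0

lemma supp_dl (r : Fin σ) (i : ℕ) : Supp r (dl r i : Idx σ q → 𝕜) := by
  intro a ha
  exact if_neg (by rintro ⟨h1, _⟩; exact ha h1)

lemma supp_Sl {r : Fin σ} {x : Idx σ q → 𝕜} (h : Supp r x) : Supp r (Sl x) := by
  intro a ha
  rw [Sl_apply]
  by_cases h0 : 0 < (a.2 : ℕ)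
  · rw [dif_pos h0]; exact h _ ha
  · rw [dif_neg h0]

lemma supp_Tl_pow {n : ℕ} (hm : ∀ r : Fin σ, 2 * q r - 1 ≤ n) {r : Fin σ} (k : ℕ)
    {x : Idx σ q → 𝕜} (h : Supp r x) : Supp r ((Tl n hm ^ k) x) := by
  induction k generalizing x with
  | zero => rw [pow_zero]; exact h
  | succ k ih =>
    have h1 : (Tl n hm ^ (k + 1)) x = (Tl n hm ^ k) (Tl n hm x) := by rw [pow_succ]; rfl
    rw [h1]
    refine ih ?_
    intro a ha
    rw [Tl_apply, Pi.add_apply, h a ha, supp_Sl h a ha, add_zero]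

lemma xc_of_supp {r0 r : Fin σ} {x : Idx σ q → 𝕜} (h : Supp r0 x) (hne : r ≠ r0) (i : ℕ) :
    xc x r i = 0 := by
  unfold xc
  by_cases hh : i < 2 * q r - 1
  · rw [dif_pos hh]; exact h _ hne
  · rw [dif_neg hh]

lemma Bl_orthog {n : ℕ} {r1 r2 : Fin σ} {x y : Idx σ q → 𝕜} (hx : Supp r1 x) (hy : Supp r2 y)
    (hne : r1 ≠ r2) : Bl n x y = 0 := by
  rw [Bl_apply]
  refine Finset.sum_eq_zero fun r' _ => Finset.sum_eq_zero fun i _ => Finset.sum_eq_zero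
    fun j _ => ?_
  by_cases h1 : r' = r1
  · rw [xc_of_supp hy (h1 ▸ hne), mul_zero, mul_zero]
  · rw [xc_of_supp hx h1, zero_mul, mul_zero]

lemma Bl_dl0_Tpow {n : ℕ} (hq : ∀ r : Fin σ, 1 ≤ q r) (hm : ∀ r : Fin σ, 2 * q r - 1 ≤ n)
    (r : Fin σ) (k : ℕ) (hk : k ≤ q r - 1) :
    Bl n (dl r 0) ((Tl n hm ^ k) (dl r 0 : Idx σ q → 𝕜))
      = if k = q r - 1 then 1 else 0 := by
  rw [Tl_pow_apply]
  have hcomm : Commute (Sl : (Idx σ q → 𝕜) →ₗ[𝕜] (Idx σ q → 𝕜)) 1 := Commute.one_right _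
  have hpow : (1 + Sl : (Idx σ q → 𝕜) →ₗ[𝕜] (Idx σ q → 𝕜)) ^ k
      = ∑ m ∈ Finset.range (k + 1),
          Sl ^ m * 1 ^ (k - m) * ((k.choose m : ℕ) : (Idx σ q → 𝕜) →ₗ[𝕜] (Idx σ q → 𝕜)) := by
    rw [add_comm 1 Sl]
    exact hcomm.add_pow k
  have happ : ((1 + Sl : (Idx σ q → 𝕜) →ₗ[𝕜] (Idx σ q → 𝕜)) ^ k) (dl r 0)
      = ∑ m ∈ Finset.range (k + 1), (k.choose m : 𝕜) • (dl r m : Idx σ q → 𝕜) := by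
    rw [hpow, LinearMap.sum_apply]
    refine Finset.sum_congr rfl fun m _ => ?_
    rw [one_pow, mul_one, Module.End.mul_apply, Module.End.natCast_apply, map_nsmul,
      Sl_pow_dl, ← Nat.cast_smul_eq_nsmul 𝕜]
  rw [happ, map_sum]
  have hterm : ∀ m ∈ Finset.range (k + 1),
      (Bl n (dl r 0)) ((k.choose m : 𝕜) • (dl r m : Idx σ q → 𝕜))
        = (k.choose m : 𝕜) * (G (q r) 0 m : 𝕜) := by
    intro m hmem
    rw [map_smul, smul_eq_mul, Bl_dl_dl hm r 0 m (by have := hq r; omega)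
      (by have := Finset.mem_range.mp hmem; have := hq r; omega)]
  rw [Finset.sum_congr rfl hterm]
  by_cases hk2 : k = q r - 1
  · subst hk2
    rw [if_pos rfl, Finset.sum_eq_single_of_mem (q r - 1) (Finset.self_mem_range_succ _)
      (fun m hmem hne => by
        rw [G_row0_zero (by have := Finset.mem_range.mp hmem; omega), Int.cast_zero, mul_zero])]
    rw [Nat.choose_self, G_row0_diag (hq r)]
    norm_num
  · rw [if_neg hk2]
    refine Finset.sum_eq_zero fun m hmem => ?_
    rw [G_row0_zero (by have := Finset.mem_range.mp hmem; omega), Int.cast_zero, mul_zero]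

lemma Bl_eps {n : ℕ} (hq : ∀ r : Fin σ, 1 ≤ q r) (hm : ∀ r : Fin σ, 2 * q r - 1 ≤ n)
    (r : Fin σ) :
    Bl n ((Sl ^ (q r - 1)) (dl r 0 : Idx σ q → 𝕜)) ((Sl ^ (q r - 1)) (dl r 0 : Idx σ q → 𝕜))
      = ((-1 : 𝕜)) ^ (q r - 1) := by
  rw [Sl_pow_dl, Bl_dl_dl hm r _ _ (by have := hq r; omega) (by have := hq r; omega),
    G_antidiag (by have := hq r; omega)]
  push_cast
  ring

lemma Bl_left_nondeg {n : ℕ} (hq : ∀ r : Fin σ, 1 ≤ q r) (hm : ∀ r : Fin σ, 2 * q r - 1 ≤ n)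
    (x : Idx σ q → 𝕜) (h : ∀ y, Bl n x y = 0) : x = 0 := by
  have key : ∀ r : Fin σ, ∀ i : ℕ, i < 2 * q r - 1 → xc x r i = 0 := by
    intro r i
    induction i using Nat.strong_induction_on with
    | _ i IH =>
      intro hi
      have h0 := h (dl r (2 * q r - 2 - i))
      rw [Bl_x_dl hm x r _ (by have := hq r; omega)] at h0
      rw [Finset.sum_eq_single_of_mem i (Finset.mem_range.mpr (lt_of_lt_of_le hi (hm r)))
        (fun i' _ hne => by
          rcases lt_or_gt_of_ne hne with hlt | hgt
          · rw [IH i' hlt (by omega), mul_zero]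
          · rw [G_eq_zero (by omega), Int.cast_zero, zero_mul])] at h0
      rw [G_antidiag (by omega)] at h0
      have hne : ((((-1 : ℤ) ^ i : ℤ)) : 𝕜) ≠ 0 := by
        push_cast
        exact pow_ne_zero _ (by norm_num)
      exact (mul_eq_zero.mp h0).resolve_left hne
  funext a
  have := key a.1 a.2 a.2.isLt
  rw [xc, dif_pos a.2.isLt] at this
  rw [Pi.zero_apply, ← this]

lemma Bl_right_nondeg {n : ℕ} (hq : ∀ r : Fin σ, 1 ≤ q r) (hm : ∀ r : Fin σ, 2 * q r - 1 ≤ n)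
    (y : Idx σ q → 𝕜) (h : ∀ x, Bl n x y = 0) : y = 0 := by
  have key : ∀ r : Fin σ, ∀ j : ℕ, j < 2 * q r - 1 → xc y r j = 0 := by
    intro r j
    induction j using Nat.strong_induction_on with
    | _ j IH =>
      intro hj
      have h0 := h (dl r (2 * q r - 2 - j))
      rw [Bl_dl_x hm y r _ (by have := hq r; omega)] at h0
      rw [Finset.sum_eq_single_of_mem j (Finset.mem_range.mpr (lt_of_lt_of_le hj (hm r)))
        (fun j' _ hne => by
          rcases lt_or_gt_of_ne hne with hlt | hgt
          · rw [IH j' hlt (by omega), mul_zero]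
          · rw [G_eq_zero (by omega), Int.cast_zero, zero_mul])] at h0
      rw [G_antidiag (by omega)] at h0
      have hne : ((((-1 : ℤ) ^ (2 * q r - 2 - j) : ℤ)) : 𝕜) ≠ 0 := by
        push_cast
        exact pow_ne_zero _ (by norm_num)
      exact (mul_eq_zero.mp h0).resolve_left hne
  funext a
  have := key a.1 a.2 a.2.isLt
  rw [xc, dif_pos a.2.isLt] at this
  rw [Pi.zero_apply, ← this]

end Model3
section Kernel

variable {𝕜 : Type*} [Field 𝕜] {σ : ℕ} {q : Fin σ → ℕ}

lemma dl_oob {r : Fin σ} {i : ℕ} (hi : 2 * q r - 1 ≤ i) : (dl r i : Idx σ q → 𝕜) = 0 := by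
  funext b
  cases b with
  | mk br bi =>
    rw [dl, if_neg (by rintro ⟨rfl, h2⟩; have := bi.isLt; omega)]
    rfl

lemma finrank_ker_Sl_pow {n : ℕ} (hm : ∀ r : Fin σ, 2 * q r - 1 ≤ n) (k : ℕ) :
    finrank 𝕜 (LinearMap.ker ((Sl : (Idx σ q → 𝕜) →ₗ[𝕜] (Idx σ q → 𝕜)) ^ k))
      = ∑ r : Fin σ, min k (2 * q r - 1) := by
  classical
  let J := {a : Idx σ q // (a.2 : ℕ) + k < 2 * q a.1 - 1}
  let π : (Idx σ q → 𝕜) →ₗ[𝕜] (J → 𝕜) := LinearMap.funLeft 𝕜 𝕜 Subtype.val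
  have hker : LinearMap.ker ((Sl : (Idx σ q → 𝕜) →ₗ[𝕜] (Idx σ q → 𝕜)) ^ k)
      = LinearMap.ker π := by
    ext x
    simp only [LinearMap.mem_ker]
    constructor
    · intro hx
      funext b
      have hb := b.2
      have hlt : (b.1.2 : ℕ) + k < 2 * q b.1.1 - 1 := hb
      have h1 := congrFun hx ⟨b.1.1, ⟨(b.1.2 : ℕ) + k, by omega⟩⟩
      rw [Sl_pow_apply, dif_pos (show k ≤ (b.1.2 : ℕ) + k by omega)] at h1
      have h2 : x b.1 = 0 := by
        rw [← x_congr x b.1.1 (show ((b.1.2 : ℕ) + k) - k < 2 * q b.1.1 - 1 by omega)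
          (show ((b.1.2 : ℕ) + k) - k < 2 * q b.1.1 - 1 by omega) rfl] at h1
        exact (x_congr x b.1.1 b.1.2.isLt _ (by omega)).trans h1
      exact h2
    · intro hx
      funext a
      rw [Sl_pow_apply]
      by_cases h : k ≤ (a.2 : ℕ)
      · rw [dif_pos h]
        have hlt : ((a.2 : ℕ) - k) + k < 2 * q a.1 - 1 := by
          have := a.2.isLt; omega
        exact congrFun hx ⟨⟨a.1, ⟨(a.2 : ℕ) - k, by have := a.2.isLt; omega⟩⟩, hlt⟩
      · rw [dif_neg h]; rfl
  have hsurj : Function.Surjective π :=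
    LinearMap.funLeft_surjective_of_injective 𝕜 𝕜 _ Subtype.val_injective
  have hrn := LinearMap.finrank_range_add_finrank_ker π
  rw [LinearMap.range_eq_top.mpr hsurj, finrank_top] at hrn
  have hcard1 : finrank 𝕜 (Idx σ q → 𝕜) = ∑ r : Fin σ, (2 * q r - 1) := by
    rw [Module.finrank_pi, Fintype.card_sigma]
    exact Finset.sum_congr rfl fun r _ => Fintype.card_fin _
  have eJ : J ≃ ((r : Fin σ) × Fin (2 * q r - 1 - k)) :=
    { toFun := fun b => ⟨b.1.1, ⟨(b.1.2 : ℕ), by have := b.2; omega⟩⟩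
      invFun := fun c => ⟨⟨c.1, ⟨(c.2 : ℕ), by have := c.2.isLt; omega⟩⟩,
        show ((c.2 : ℕ)) + k < 2 * q c.1 - 1 by have := c.2.isLt; omega⟩
      left_inv := fun b => rfl
      right_inv := fun c => rfl }
  have hcard2 : finrank 𝕜 (J → 𝕜) = ∑ r : Fin σ, (2 * q r - 1 - k) := by
    rw [Module.finrank_pi, Fintype.card_congr eJ, Fintype.card_sigma]
    exact Finset.sum_congr rfl fun r _ => Fintype.card_fin _
  rw [hker]
  rw [hcard1, hcard2] at hrn
  have hsum : ∑ r : Fin σ, (2 * q r - 1 - k) + ∑ r : Fin σ, min k (2 * q r - 1)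
      = ∑ r : Fin σ, (2 * q r - 1) := by
    rw [← Finset.sum_add_distrib]
    exact Finset.sum_congr rfl fun r _ => by omega
  omega

end Kernel

section Abstract

variable {𝕜 : Type*} [Field 𝕜] {M : Type*} [AddCommGroup M] [Module 𝕜 M]

lemma iso_of (B : M →ₗ[𝕜] M →ₗ[𝕜] 𝕜) (T : M ≃ₗ[𝕜] M) (hB : ∀ x y, B (T x) y = B y x)
    (x y : M) : B (T x) (T y) = B x y := by
  rw [hB x (T y), hB y x]

lemma RA (B : M →ₗ[𝕜] M →ₗ[𝕜] 𝕜) (T : M ≃ₗ[𝕜] M) (hB : ∀ x y, B (T x) y = B y x)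
    (k : ℕ) (x y : M) : B x ((T⁻¹ ^ k) y) = B ((T ^ k) x) y := by
  induction k generalizing x y with
  | zero => rw [pow_zero, pow_zero]; rfl
  | succ k ih =>
    have h1 : (T⁻¹ ^ (k + 1)) y = (T⁻¹ ^ k) (T⁻¹ y) := by rw [pow_succ]; rfl
    have h2 : (T ^ (k + 1)) x = T ((T ^ k) x) := by rw [pow_succ']; rfl
    rw [h1, ih, h2]
    have h3 := iso_of B T hB ((T ^ k) x) (T⁻¹ y)
    have h4 : T ((T⁻¹ : M ≃ₗ[𝕜] M) y) = y := T.apply_symm_apply y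
    rw [h4] at h3
    exact h3.symm
  
lemma RB (B : M →ₗ[𝕜] M →ₗ[𝕜] 𝕜) (T : M ≃ₗ[𝕜] M) (hB : ∀ x y, B (T x) y = B y x)
    (k : ℕ) (x y : M) : B ((T ^ (k + 1)) x) y = B y ((T ^ k) x) := by
  have h2 : (T ^ (k + 1)) x = T ((T ^ k) x) := by rw [pow_succ']; rfl
  rw [h2, hB]

/-- Conjugation of automorphisms along a linear equivalence, as a group hom. -/
def conjHom {V : Type*} [AddCommGroup V] [Module 𝕜 V] (e : M ≃ₗ[𝕜] V) :
    (M ≃ₗ[𝕜] M) →* (V ≃ₗ[𝕜] V) where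
  toFun f := (e.symm.trans f).trans e
  map_one' := by
    apply LinearEquiv.ext
    intro x
    show e (e.symm x) = x
    exact e.apply_symm_apply x
  map_mul' f g := by
    apply LinearEquiv.ext
    intro x
    show e (f (g (e.symm x))) = e (f (e.symm (e (g (e.symm x)))))
    rw [e.symm_apply_apply]

lemma conjHom_apply {V : Type*} [AddCommGroup V] [Module 𝕜 V] (e : M ≃ₗ[𝕜] V)
    (f : M ≃ₗ[𝕜] M) (x : V) : (conjHom e f) x = e (f (e.symm x)) := rfl

end Abstract
end SLem

open Module

/-- §5.1 together with 5.3(a): as in 5.1 there exist `B`, `T` (unipotent of Jordan type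
`(2p₁−1,…,2p_σ−1)`) and `v₁,…,v_σ` satisfying the normalized 𝒮-conditions, and moreover for
every `t` there is `x` with `(T−1)^{2p_t−1} x = 0` and
`B((T−1)^{p_t−1} x, (T−1)^{p_t−1} x) ≠ 0`. -/
theorem exists_bilinear_form_unipotent_with_S_conditions_and_eps_one
    (𝕜 : Type*) [Field 𝕜] [IsAlgClosed 𝕜]
    (V : Type*) [AddCommGroup V] [Module 𝕜 V] [FiniteDimensional 𝕜 V]
    (σ n : ℕ) (p : ℕ → ℕ)
    (hσ : 1 ≤ σ) (hn1 : 1 ≤ n)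
    (hp1 : ∀ r, 1 ≤ r → r ≤ σ → 1 ≤ p r)
    (hmono : ∀ r, 1 ≤ r → r < σ → p (r + 1) ≤ p r)
    (hn : n = ∑ r ∈ Finset.Icc 1 σ, (2 * p r - 1))
    (hdimV : finrank 𝕜 V = n) :
    ∃ B : V →ₗ[𝕜] V →ₗ[𝕜] 𝕜, ∃ T : V ≃ₗ[𝕜] V, ∃ v : ℕ → V,
      (∀ x, (∀ y, B x y = 0) → x = 0) ∧
      (∀ y, (∀ x, B x y = 0) → y = 0) ∧
      (∀ x y, B (T x) y = B y x) ∧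
      (∀ k : ℕ, finrank 𝕜 ↥(LinearMap.ker (((T : Module.End 𝕜 V) - 1) ^ k)) =
        ∑ r ∈ Finset.Icc 1 σ, min k (2 * p r - 1)) ∧
      (∀ r ∈ Finset.Icc 1 σ, ∀ t ∈ Finset.Icc 1 σ, t < r →
        ∀ m : ℤ, -(p t : ℤ) ≤ m → m ≤ (p t : ℤ) - 2 → B (v r) ((T ^ m) (v t)) = 0) ∧
      (∀ r ∈ Finset.Icc 1 σ, ∀ m : ℤ, -(p r : ℤ) + 1 ≤ m → m ≤ (p r : ℤ) - 2 →
        B (v r) ((T ^ m) (v r)) = 0) ∧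
      (∀ r ∈ Finset.Icc 1 σ, B (v r) ((T ^ ((p r : ℤ) - 1)) (v r)) = 1) ∧
      (∀ t ∈ Finset.Icc 1 σ, ∃ x : V,
        (((T : Module.End 𝕜 V) - 1) ^ (2 * p t - 1)) x = 0 ∧
        B ((((T : Module.End 𝕜 V) - 1) ^ (p t - 1)) x)
          ((((T : Module.End 𝕜 V) - 1) ^ (p t - 1)) x) ≠ 0) := by
  classical
  let q : Fin σ → ℕ := fun r => p (↑r + 1)
  have hq : ∀ r : Fin σ, 1 ≤ q r := fun r => hp1 (↑r + 1) (by omega) (by have := r.isLt; omega)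
  have hIcc : ∀ f : ℕ → ℕ, ∑ r ∈ Finset.Icc 1 σ, f r = ∑ r : Fin σ, f (↑r + 1) := by
    intro f
    rw [← Finset.Ico_add_one_right_eq_Icc, Finset.sum_Ico_eq_sum_range,
      show σ + 1 - 1 = σ from rfl,
      ← Fin.sum_univ_eq_sum_range (fun i => f (1 + i)) σ]
    exact Finset.sum_congr rfl fun r _ => by rw [Nat.add_comm]
  have hnsum : n = ∑ r : Fin σ, (2 * q r - 1) := by
    rw [hn, hIcc fun r => 2 * p r - 1]
  have hm : ∀ r : Fin σ, 2 * q r - 1 ≤ n := by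
    intro r
    rw [hnsum]
    exact Finset.single_le_sum (f := fun r : Fin σ => 2 * q r - 1) (fun _ _ => Nat.zero_le _)
      (Finset.mem_univ r)
  have hn0 : 0 < n := hn1
  have hfr : finrank 𝕜 (SLem.Idx σ q → 𝕜) = finrank 𝕜 V := by
    rw [hdimV, Module.finrank_pi, Fintype.card_sigma, hnsum]
    exact Finset.sum_congr rfl fun r _ => Fintype.card_fin _
  let e : (SLem.Idx σ q → 𝕜) ≃ₗ[𝕜] V := LinearEquiv.ofFinrankEq _ _ hfr
  let BV : V →ₗ[𝕜] V →ₗ[𝕜] 𝕜 :=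
    (SLem.Bl n).compl₁₂ (e.symm : V →ₗ[𝕜] (SLem.Idx σ q → 𝕜))
      (e.symm : V →ₗ[𝕜] (SLem.Idx σ q → 𝕜))
  let TV : V ≃ₗ[𝕜] V := SLem.conjHom e (SLem.Tl n hm)
  let v : ℕ → V := fun r => if h : r - 1 < σ then e (SLem.dl ⟨r - 1, h⟩ 0) else 0
  have hBV : ∀ x y, BV x y = SLem.Bl n (e.symm x) (e.symm y) := fun x y => rfl
  have hTV : ∀ x, TV x = e (SLem.Tl n hm (e.symm x)) := fun x => rfl
  have hTVpow : ∀ (k : ℕ) (x : SLem.Idx σ q → 𝕜),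
      (TV ^ k) (e x) = e ((SLem.Tl n hm ^ k) x) := by
    intro k x
    have h1 : TV ^ k = SLem.conjHom e (SLem.Tl n hm ^ k) :=
      (map_pow (SLem.conjHom e) (SLem.Tl n hm) k).symm
    rw [h1, SLem.conjHom_apply, e.symm_apply_apply]
  have hB1V : ∀ x y, BV (TV x) y = BV y x := by
    intro x y
    rw [hBV, hBV, hTV, e.symm_apply_apply, SLem.Tl_apply]
    exact SLem.Bl_shift_eq hq hm hn0 (e.symm x) (e.symm y)
  have hconj : ∀ (k : ℕ) (x : SLem.Idx σ q → 𝕜),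
      (((TV : Module.End 𝕜 V) - 1) ^ k) (e x) = e ((SLem.Sl ^ k) x) := by
    intro k
    induction k with
    | zero => intro x; rw [pow_zero, pow_zero]; rfl
    | succ k ih =>
      intro x
      have hbase : ((TV : Module.End 𝕜 V) - 1) (e x) = e (SLem.Sl x) := by
        rw [LinearMap.sub_apply, Module.End.one_apply]
        have h2 : (TV : Module.End 𝕜 V) (e x) = e (SLem.Tl n hm x) := by
          rw [LinearEquiv.coe_coe, hTV, e.symm_apply_apply]
        rw [h2, SLem.Tl_apply, map_add]
        abel
      rw [pow_succ, Module.End.mul_apply, hbase, ih (SLem.Sl x), pow_succ, Module.End.mul_apply]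
  have hdiag : ∀ (ρ : Fin σ) (k : ℕ), k ≤ q ρ - 1 →
      BV (e (SLem.dl ρ 0)) ((TV ^ k) (e (SLem.dl ρ 0))) = if k = q ρ - 1 then 1 else 0 := by
    intro ρ k hk
    rw [hTVpow, hBV, e.symm_apply_apply, e.symm_apply_apply]
    exact SLem.Bl_dl0_Tpow hq hm ρ k hk
  have hcross : ∀ (ρ τ : Fin σ), ρ ≠ τ → ∀ k : ℕ,
      BV (e (SLem.dl ρ 0)) ((TV ^ k) (e (SLem.dl τ 0))) = 0 := by
    intro ρ τ hne k
    rw [hTVpow, hBV, e.symm_apply_apply, e.symm_apply_apply]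
    exact SLem.Bl_orthog (SLem.supp_dl ρ 0) (SLem.supp_Tl_pow hm k (SLem.supp_dl τ 0)) hne
  have hcross2 : ∀ (ρ τ : Fin σ), ρ ≠ τ → ∀ k : ℕ,
      BV ((TV ^ k) (e (SLem.dl ρ 0))) (e (SLem.dl τ 0)) = 0 := by
    intro ρ τ hne k
    rw [hTVpow, hBV, e.symm_apply_apply, e.symm_apply_apply]
    exact SLem.Bl_orthog (SLem.supp_Tl_pow hm k (SLem.supp_dl ρ 0)) (SLem.supp_dl τ 0) hne
  refine ⟨BV, TV, v, ?_, ?_, hB1V, ?_, ?_, ?_, ?_, ?_⟩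
  · -- left nondegeneracy
    intro x hx
    have h1 : e.symm x = 0 := by
      apply SLem.Bl_left_nondeg hq hm
      intro y'
      have h2 := hx (e y')
      rw [hBV, e.symm_apply_apply] at h2
      exact h2
    have h3 := congrArg e h1
    rw [e.apply_symm_apply, map_zero] at h3
    exact h3
  · -- right nondegeneracy
    intro y hy
    have h1 : e.symm y = 0 := by
      apply SLem.Bl_right_nondeg hq hm
      intro x'
      have h2 := hy (e x')
      rw [hBV, e.symm_apply_apply] at h2
      exact h2
    have h3 := congrArg e h1
    rw [e.apply_symm_apply, map_zero] at h3
    exact h3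
  · -- kernel dimensions
    intro k
    have hmap : LinearMap.ker (((TV : Module.End 𝕜 V) - 1) ^ k)
        = Submodule.map (e : (SLem.Idx σ q → 𝕜) →ₗ[𝕜] V)
            (LinearMap.ker ((SLem.Sl : (SLem.Idx σ q → 𝕜) →ₗ[𝕜] (SLem.Idx σ q → 𝕜)) ^ k)) := by
      ext y
      rw [Submodule.mem_map_equiv, LinearMap.mem_ker, LinearMap.mem_ker]
      constructor
      · intro h
        have h1 : (((TV : Module.End 𝕜 V) - 1) ^ k) (e (e.symm y)) = 0 := by
          rw [e.apply_symm_apply]; exact h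
        rw [hconj k (e.symm y)] at h1
        exact (LinearEquiv.map_eq_zero_iff e).mp h1
      · intro h
        have h1 := hconj k (e.symm y)
        rw [e.apply_symm_apply] at h1
        rw [h1, h, map_zero]
    rw [hmap, LinearEquiv.finrank_map_eq, SLem.finrank_ker_Sl_pow hm k,
      hIcc fun r => min k (2 * p r - 1)]
  · -- cross conditions
    intro r hr t ht hlt mz _ _
    rw [Finset.mem_Icc] at hr ht
    have hρ : r - 1 < σ := by omega
    have hτ : t - 1 < σ := by omega
    have hvr : v r = e (SLem.dl ⟨r - 1, hρ⟩ 0) := dif_pos hρ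
    have hvt : v t = e (SLem.dl ⟨t - 1, hτ⟩ 0) := dif_pos hτ
    have hneq : (⟨r - 1, hρ⟩ : Fin σ) ≠ ⟨t - 1, hτ⟩ := by
      intro hcon
      simp only [Fin.mk.injEq] at hcon
      omega
    rw [hvr, hvt]
    cases mz with
    | ofNat k =>
      rw [show ((Int.ofNat k : ℤ)) = ((k : ℕ) : ℤ) from rfl, zpow_natCast]
      exact hcross _ _ hneq k
    | negSucc k =>
      rw [zpow_negSucc, ← inv_pow, SLem.RA BV TV hB1V (k + 1)]
      exact hcross2 _ _ hneq (k + 1)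
  · -- diagonal window conditions
    intro r hr mz hmz1 hmz2
    rw [Finset.mem_Icc] at hr
    have hρ : r - 1 < σ := by omega
    have hvr : v r = e (SLem.dl ⟨r - 1, hρ⟩ 0) := dif_pos hρ
    have hqρ : q ⟨r - 1, hρ⟩ = p r := by
      show p (r - 1 + 1) = p r
      congr 1
      omega
    rw [hvr]
    cases mz with
    | ofNat k =>
      rw [show ((Int.ofNat k : ℤ)) = ((k : ℕ) : ℤ) from rfl] at hmz1 hmz2
      have hk : k + 2 ≤ p r := by omega
      rw [show ((Int.ofNat k : ℤ)) = ((k : ℕ) : ℤ) from rfl, zpow_natCast,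
        hdiag _ k (by rw [hqρ]; omega), if_neg (by rw [hqρ]; omega)]
    | negSucc k =>
      rw [Int.negSucc_eq] at hmz1 hmz2
      have hk : k + 2 ≤ p r := by omega
      rw [zpow_negSucc, ← inv_pow, SLem.RA BV TV hB1V (k + 1), SLem.RB BV TV hB1V k,
        hdiag _ k (by rw [hqρ]; omega), if_neg (by rw [hqρ]; omega)]
  · -- diagonal value conditions
    intro r hr
    rw [Finset.mem_Icc] at hr
    have hρ : r - 1 < σ := by omega
    have hvr : v r = e (SLem.dl ⟨r - 1, hρ⟩ 0) := dif_pos hρ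
    have hqρ : q ⟨r - 1, hρ⟩ = p r := by
      show p (r - 1 + 1) = p r
      congr 1
      omega
    have hp1r : 1 ≤ p r := hp1 r hr.1 hr.2
    have hcast : ((p r : ℤ)) - 1 = ((p r - 1 : ℕ) : ℤ) := by omega
    rw [hvr, hcast, zpow_natCast, hdiag _ (p r - 1) (by rw [hqρ]),
      if_pos (by rw [hqρ])]
  · -- epsilon conditions
    intro t ht
    rw [Finset.mem_Icc] at ht
    have hτ : t - 1 < σ := by omega
    have hqτ : q ⟨t - 1, hτ⟩ = p t := by
      show p (t - 1 + 1) = p t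
      congr 1
      omega
    refine ⟨e (SLem.dl ⟨t - 1, hτ⟩ 0), ?_, ?_⟩
    · rw [hconj (2 * p t - 1) (SLem.dl ⟨t - 1, hτ⟩ 0), SLem.Sl_pow_dl,
        SLem.dl_oob (by rw [hqτ])]
      exact map_zero _
    · rw [hconj (p t - 1), hBV, e.symm_apply_apply,
        show p t - 1 = q ⟨t - 1, hτ⟩ - 1 by rw [hqτ], SLem.Bl_eps hq hm]
      exact pow_ne_zero _ (by norm_num)
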